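/- Let K be a polytope with 0 in its interior and z ∈ ∂K, and let F be the smallest-dimensional face of K containing z, with normal facets F_i ⊇ F having outer normal vertices v_i ∈ ∂K°. Then N(K, z) ∩ ∂K° equals the convex hull of {v_i : F_i ⊇ F}. -/

import Mathlib

open RealInnerProductSpace

/-- The polar set of `K`. -/
def polarSet {n : ℕ} (K : Set (EuclideanSpace ℝ (Fin n))) : Set (EuclideanSpace ℝ (Fin n)) :=
  {x | ∀ y ∈ K, ⟪x, y⟫ ≤ 1}

/-- The normal cone of `K` at `z`. -/
def normalCone {n : ℕ} (K : Set (EuclideanSpace ℝ (Fin n))) (z : EuclideanSpace ℝ (Fin n)) :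
    Set (EuclideanSpace ℝ (Fin n)) :=
  {v | ∀ y ∈ K, ⟪y - z, v⟫ ≤ 0}

/-- Let `K` be a polytope with `0` in its interior, presented as the intersection of the
halfspaces `{x | ⟪x, v⟫ ≤ 1}` over the finitely many (normalized) outer facet normals `v ∈ V`
(which are then the vertices of `K°`, and the facets of `K` are the sets `K ∩ {x | ⟪x, v⟫ = 1}`).
For `z ∈ ∂K`, the facets of `K` containing the smallest face of `K` containing `z` are exactly
those containing `z`, i.e. those with normal `v ∈ V` satisfying `⟪z, v⟫ = 1`.  Then
`N(K, z) ∩ ∂K°` equals the convex hull of these facet normals. -/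
theorem normalCone_inter_frontier_polar_eq_convexHull {n : ℕ}
    (V : Finset (EuclideanSpace ℝ (Fin n))) (K : Set (EuclideanSpace ℝ (Fin n)))
    (hK : K = {x | ∀ v ∈ V, ⟪x, v⟫ ≤ 1})
    (hKc : IsCompact K) (h0 : (0 : EuclideanSpace ℝ (Fin n)) ∈ interior K)
    (z : EuclideanSpace ℝ (Fin n)) (hz : z ∈ frontier K) :
    normalCone K z ∩ frontier (polarSet K)
      = convexHull ℝ {v : EuclideanSpace ℝ (Fin n) | v ∈ V ∧ ⟪z, v⟫ = 1} := by
  classical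

  have hKclosed : IsClosed K := hKc.isClosed
  have hzK : z ∈ K := by
    have := frontier_subset_closure hz
    rwa [hKclosed.closure_eq] at this
  have h0K : (0 : (EuclideanSpace ℝ (Fin n))) ∈ K := interior_subset h0
  have hzni : z ∉ interior K := hz.2
  have hzne : z ≠ 0 := fun h => hzni (h ▸ h0)
  -- polar set is closed
  have hPmem : ∀ w : (EuclideanSpace ℝ (Fin n)), w ∈ polarSet K ↔ ∀ y ∈ K, ⟪w, y⟫ ≤ 1 := fun w => Iff.rfl
  have hPclosed : IsClosed (polarSet K) := by
    have he : polarSet K = ⋂ y ∈ K, {x : (EuclideanSpace ℝ (Fin n)) | ⟪x, y⟫ ≤ 1} := by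
      ext x; simp [polarSet]
    rw [he]
    exact isClosed_biInter fun y _ =>
      isClosed_le (Continuous.inner continuous_id continuous_const) continuous_const
  -- bound on K
  obtain ⟨r, hr⟩ := hKc.isBounded.subset_closedBall 0
  set M : ℝ := max r 1 with hMdef
  have hMpos : (0 : ℝ) < M := lt_of_lt_of_le one_pos (le_max_right _ _)
  have hyM : ∀ y ∈ K, ‖y‖ ≤ M := by
    intro y hy
    have := hr hy
    simp only [Metric.mem_closedBall, dist_zero_right] at this
    exact le_trans this (le_max_left _ _)
  -- sufficient condition for interior of polar
  have hint : ∀ w : (EuclideanSpace ℝ (Fin n)), (∀ y ∈ K, ⟪w, y⟫ < 1) → w ∈ interior (polarSet K) := by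
    intro w hw
    obtain ⟨y₀, hy₀K, hy₀max⟩ := hKc.exists_isMaxOn (f := fun y => (⟪w, y⟫ : ℝ)) ⟨0, h0K⟩
      ((Continuous.inner continuous_const continuous_id).continuousOn)
    set c : ℝ := ⟪w, y₀⟫ with hc
    have hc1 : c < 1 := hw y₀ hy₀K
    apply mem_interior.mpr
    refine ⟨Metric.ball w ((1 - c) / M), ?_, Metric.isOpen_ball,
      Metric.mem_ball_self (div_pos (by linarith) hMpos)⟩
    intro w' hw' y hy
    have h1 : ⟪w', y⟫ = ⟪w, y⟫ + ⟪w' - w, y⟫ := by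
      rw [inner_sub_left]; ring
    have h2 : ⟪w' - w, y⟫ ≤ ‖w' - w‖ * ‖y‖ := real_inner_le_norm _ _
    have h3 : ‖w' - w‖ * ‖y‖ ≤ ‖w' - w‖ * M :=
      mul_le_mul_of_nonneg_left (hyM y hy) (norm_nonneg _)
    have h4 : ‖w' - w‖ < (1 - c) / M := by
      rw [Metric.mem_ball, dist_eq_norm] at hw'; exact hw'
    have h5 : ‖w' - w‖ * M < ((1 - c) / M) * M := by
      exact mul_lt_mul_of_pos_right h4 hMpos
    have h6 : ((1 - c) / M) * M = 1 - c := div_mul_cancel₀ _ (ne_of_gt hMpos)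
    have h7 : ⟪w, y⟫ ≤ c := hy₀max hy
    show ⟪w', y⟫ ≤ 1
    linarith
  -- the set V' = insert 0 V
  set V' : Finset (EuclideanSpace ℝ (Fin n)) := insert (0 : (EuclideanSpace ℝ (Fin n))) V with hV'def
  have hzv_le : ∀ v ∈ V', ⟪z, v⟫ ≤ 1 := by
    intro v hv
    rcases Finset.mem_insert.mp hv with h | h
    · simp [h]
    · rw [hK] at hzK; exact hzK v h
  ext w
  constructor
  · rintro ⟨hwN, hwF⟩
    have hwP : w ∈ polarSet K := by
      have := hwF.1
      rwa [hPclosed.closure_eq] at this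
    have hwni : w ∉ interior (polarSet K) := hwF.2
    -- some point of K achieves inner ≥ 1
    have hex : ∃ y ∈ K, 1 ≤ ⟪w, y⟫ := by
      by_contra h
      push_neg at h
      exact hwni (hint w h)
    obtain ⟨y, hyK, hy1⟩ := hex
    have hzw : ⟪z, w⟫ = 1 := by
      have h1 : ⟪y - z, w⟫ ≤ 0 := hwN y hyK
      have h2 : ⟪w, z⟫ ≤ 1 := hwP z hzK
      rw [inner_sub_left] at h1
      have e1 : ⟪y, w⟫ = ⟪w, y⟫ := real_inner_comm _ _
      have e2 : ⟪z, w⟫ = ⟪w, z⟫ := real_inner_comm _ _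
      linarith
    -- bipolar: w ∈ convexHull of V'
    have hwC : w ∈ convexHull ℝ (↑V' : Set (EuclideanSpace ℝ (Fin n))) := by
      by_contra hc
      have hCconv : Convex ℝ (convexHull ℝ (↑V' : Set (EuclideanSpace ℝ (Fin n)))) := convex_convexHull _ _
      have hCclosed : IsClosed (convexHull ℝ (↑V' : Set (EuclideanSpace ℝ (Fin n)))) :=
        (Set.Finite.isCompact_convexHull (𝕜 := ℝ) V'.finite_toSet).isClosed
      obtain ⟨f, u, hfu, huf⟩ := geometric_hahn_banach_closed_point hCconv hCclosed hc
      set u₀ : (EuclideanSpace ℝ (Fin n)) := (InnerProductSpace.toDual ℝ (EuclideanSpace ℝ (Fin n))).symm f with hu₀def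
      have hrep : ∀ x : (EuclideanSpace ℝ (Fin n)), ⟪u₀, x⟫ = f x := fun x => InnerProductSpace.toDual_symm_apply
      have hu0 : (0 : ℝ) < u := by
        have h0' : f 0 < u := hfu 0 (subset_convexHull _ _ (by simp [hV'def]))
        simpa using h0'
      set y : (EuclideanSpace ℝ (Fin n)) := u⁻¹ • u₀ with hydef
      have hyK : y ∈ K := by
        rw [hK]
        intro v hv
        have hv' : ⟪u₀, v⟫ < u := by
          rw [hrep]
          exact hfu v (subset_convexHull _ _ (by simp [hV'def, hv]))
        have h9 : ⟪y, v⟫ = u⁻¹ * ⟪u₀, v⟫ := real_inner_smul_left _ _ _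
        rw [h9]
        calc u⁻¹ * ⟪u₀, v⟫ ≤ u⁻¹ * u :=
              mul_le_mul_of_nonneg_left (le_of_lt hv') (le_of_lt (inv_pos.mpr hu0))
          _ = 1 := inv_mul_cancel₀ (ne_of_gt hu0)
      have hle : ⟪w, y⟫ ≤ 1 := hwP y hyK
      have hgt : 1 < ⟪w, y⟫ := by
        have hwu : u < ⟪u₀, w⟫ := by rw [hrep]; exact huf
        have h9 : ⟪w, y⟫ = u⁻¹ * ⟪u₀, w⟫ := by
          rw [real_inner_comm]; exact real_inner_smul_left _ _ _
        rw [h9]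
        calc (1 : ℝ) = u⁻¹ * u := (inv_mul_cancel₀ (ne_of_gt hu0)).symm
          _ < u⁻¹ * ⟪u₀, w⟫ := mul_lt_mul_of_pos_left hwu (inv_pos.mpr hu0)
      linarith
    rw [Finset.convexHull_eq] at hwC
    obtain ⟨lam, hlam0, hlam1, hlamw⟩ := hwC
    have hw_eq : ∑ v ∈ V', lam v • v = w := by
      rw [← hlamw, Finset.centerMass_eq_of_sum_1 _ id hlam1]
      rfl
    have hsum0 : ∑ v ∈ V', lam v * (1 - ⟪z, v⟫) = 0 := by
      have hz_sum : ⟪z, w⟫ = ∑ v ∈ V', lam v * ⟪z, v⟫ := by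
        rw [← hw_eq, inner_sum]
        exact Finset.sum_congr rfl fun v _ => real_inner_smul_right _ _ _
      have he : ∑ v ∈ V', lam v * (1 - ⟪z, v⟫)
          = (∑ v ∈ V', lam v) - ∑ v ∈ V', lam v * ⟪z, v⟫ := by
        rw [← Finset.sum_sub_distrib]
        exact Finset.sum_congr rfl fun v _ => by ring
      rw [he, hlam1, ← hz_sum, hzw]; ring
    have hzero : ∀ v ∈ V', ⟪z, v⟫ ≠ 1 → lam v = 0 := by
      intro v hv hne
      have hterm : lam v * (1 - ⟪z, v⟫) = 0 :=
        (Finset.sum_eq_zero_iff_of_nonneg fun v hv =>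
          mul_nonneg (hlam0 v hv) (by linarith [hzv_le v hv])).mp hsum0 v hv
      rcases mul_eq_zero.mp hterm with h | h
      · exact h
      · exact absurd (by linarith : ⟪z, v⟫ = 1) hne
    set T : Finset (EuclideanSpace ℝ (Fin n)) := V'.filter (fun v => ⟪z, v⟫ = 1) with hTdef
    have hsubset : T ⊆ V' := Finset.filter_subset _ _
    have hTsum : ∑ v ∈ T, lam v = 1 := by
      rw [← hlam1]
      apply Finset.sum_subset hsubset
      intro v hv hvT
      exact hzero v hv fun h => hvT (Finset.mem_filter.mpr ⟨hv, h⟩)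
    have hTw : ∑ v ∈ T, lam v • v = w := by
      rw [← hw_eq]
      apply Finset.sum_subset hsubset
      intro v hv hvT
      rw [hzero v hv fun h => hvT (Finset.mem_filter.mpr ⟨hv, h⟩), zero_smul]
    have hTS : (↑T : Set (EuclideanSpace ℝ (Fin n))) ⊆ {v : (EuclideanSpace ℝ (Fin n)) | v ∈ V ∧ ⟪z, v⟫ = 1} := by
      intro v hv
      obtain ⟨hv1, hv2⟩ := Finset.mem_filter.mp hv
      refine ⟨?_, hv2⟩
      rcases Finset.mem_insert.mp hv1 with h | h
      · exfalso
        rw [h] at hv2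
        simp at hv2
      · exact h
    have hmem : w ∈ convexHull ℝ (↑T : Set (EuclideanSpace ℝ (Fin n))) := by
      have := T.centerMass_mem_convexHull (w := lam)
        (fun v hv => hlam0 v (hsubset hv)) (by rw [hTsum]; norm_num)
        (z := id) (fun v hv => hv)
      rwa [Finset.centerMass_eq_of_sum_1 _ id hTsum, show (∑ v ∈ T, lam v • id v) = w from hTw]
        at this
    exact convexHull_mono hTS hmem
  · intro hw
    -- the target convex superset
    set A : Set (EuclideanSpace ℝ (Fin n)) := polarSet K ∩ normalCone K z ∩ {v : (EuclideanSpace ℝ (Fin n)) | ⟪z, v⟫ = 1} with hAdef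
    have hlinL : ∀ y : EuclideanSpace ℝ (Fin n),
        IsLinearMap ℝ (fun x : EuclideanSpace ℝ (Fin n) => (⟪x, y⟫ : ℝ)) := fun y =>
      ⟨fun a b => inner_add_left a b y, fun c x => real_inner_smul_left x y c⟩
    have hlinR : ∀ y : EuclideanSpace ℝ (Fin n),
        IsLinearMap ℝ (fun x : EuclideanSpace ℝ (Fin n) => (⟪y, x⟫ : ℝ)) := fun y =>
      ⟨fun a b => inner_add_right y a b, fun c x => real_inner_smul_right y x c⟩
    have hAconv : Convex ℝ A := by
      refine Convex.inter (Convex.inter ?_ ?_) ?_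
      · have he : polarSet K = ⋂ y ∈ K, {x : (EuclideanSpace ℝ (Fin n)) | ⟪x, y⟫ ≤ 1} := by ext x; simp [polarSet]
        rw [he]
        exact convex_iInter fun y => convex_iInter fun _ => convex_halfSpace_le (hlinL y) 1
      · have he : normalCone K z = ⋂ y ∈ K, {v : (EuclideanSpace ℝ (Fin n)) | ⟪y - z, v⟫ ≤ 0} := by
          ext v; simp [normalCone]
        rw [he]
        exact convex_iInter fun y => convex_iInter fun _ => convex_halfSpace_le (hlinR (y - z)) 0
      · exact convex_hyperplane (hlinR z) 1
    have hSA : {v : (EuclideanSpace ℝ (Fin n)) | v ∈ V ∧ ⟪z, v⟫ = 1} ⊆ A := by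
      rintro v ⟨hvV, hv1⟩
      refine ⟨⟨?_, ?_⟩, hv1⟩
      · intro y hy
        rw [hK] at hy
        rw [real_inner_comm]
        exact hy v hvV
      · intro y hy
        rw [hK] at hy
        rw [inner_sub_left]
        have := hy v hvV
        linarith
    have hwA : w ∈ A := convexHull_min hSA hAconv hw
    obtain ⟨⟨hwP, hwN⟩, hwz⟩ := hwA
    refine ⟨hwN, ?_⟩
    rw [frontier, hPclosed.closure_eq]
    refine ⟨hwP, ?_⟩
    intro hint'
    obtain ⟨ε, hε, hball⟩ := Metric.isOpen_iff.mp isOpen_interior w hint'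
    have hznorm : (0 : ℝ) < ‖z‖ := norm_pos_iff.mpr hzne
    set t : ℝ := ε / (2 * ‖z‖) with htdef
    have ht : 0 < t := by positivity
    have hmem : w + t • z ∈ polarSet K := by
      apply interior_subset
      apply hball
      rw [Metric.mem_ball, dist_eq_norm]
      have : w + t • z - w = t • z := by abel
      rw [this, norm_smul, Real.norm_eq_abs, abs_of_pos ht]
      have he2 : t * ‖z‖ = ε / 2 := by
        rw [htdef]; field_simp
      rw [he2]; linarith
    have h1 : ⟪w + t • z, z⟫ ≤ 1 := hmem z hzK
    have h2 : ⟪w + t • z, z⟫ = ⟪w, z⟫ + t * ‖z‖ ^ 2 := by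
      rw [inner_add_left, real_inner_smul_left, real_inner_self_eq_norm_sq]
    have h3 : ⟪w, z⟫ = 1 := by rw [real_inner_comm]; exact hwz
    have hpos : 0 < t * ‖z‖ ^ 2 := by positivity
    linarith
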